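/- arXiv:2407.10178 — 2 statements merged into one kernel-verified Lean document; each statement's English description precedes it below -/
import Mathlib

section
/- Let a > 0 and let φ : [0,a] → ℝ be an increasing, concave, continuous function with φ(0) = 0 and φ(a) = 1. If f is an extreme point of the closed unit ball of the Lorentz space Λ(φ)[0,a], then there exist a measurable set E ⊆ [0,a] with m(E) > 0 and a measurable function ε : [0,a] → ℂ with |ε(t)| = 1 for a.e. t, such that f(t) = (ε(t)/φ(m(E))) · χ_E(t) for a.e. t ∈ [0,a], where χ_E is the indicator function of E. -/
open MeasureTheory Set Filter Topology
open scoped ENNReal NNReal Classical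

noncomputable section

/-- The distribution function `m {s ∈ [0,a] : τ < ‖f s‖}` of `f` on `[0,a]`. -/
def distrib {E : Type*} [NormedAddCommGroup E] (a : ℝ) (f : ℝ → E) (τ : ℝ) : ℝ≥0∞ :=
  volume {s ∈ Set.Icc (0:ℝ) a | τ < ‖f s‖}

/-- The decreasing rearrangement `f*` of `f` on `[0,a]`:
`f*(t) = inf {τ ≥ 0 : m {s ∈ [0,a] : ‖f s‖ > τ} ≤ t}`. -/
def rearr {E : Type*} [NormedAddCommGroup E] (a : ℝ) (f : ℝ → E) (t : ℝ) : ℝ :=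
  sInf {τ : ℝ | 0 ≤ τ ∧ distrib a f τ ≤ ENNReal.ofReal t}

/-- The clamp of `t : ℝ` to the interval `[0,a]`. -/
def clampIcc (a t : ℝ) : ℝ := min (max t 0) a

lemma clampIcc_mem (a t : ℝ) (ha : 0 ≤ a) : clampIcc a t ∈ Set.Icc (0:ℝ) a :=
  ⟨le_min (le_max_right t 0) ha, min_le_right _ _⟩

lemma clampIcc_mono (a : ℝ) : Monotone (clampIcc a) := fun _ _ hst =>
  min_le_min (max_le_max hst le_rfl) le_rfl

lemma clampIcc_continuous (a : ℝ) : Continuous (clampIcc a) :=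
  (continuous_id.max continuous_const).min continuous_const

/-- The Stieltjes integrator associated with an increasing continuous function `φ` on `[0,a]`
(extended to all of `ℝ` as a constant outside `[0,a]`).  Its Lebesgue–Stieltjes measure
realizes the integrals `∫₀^a ⋯ dφ(t)`. -/
def stieltjesOfOn (φ : ℝ → ℝ) (a : ℝ) : StieltjesFunction ℝ :=
  if h : 0 ≤ a ∧ MonotoneOn φ (Set.Icc 0 a) ∧ ContinuousOn φ (Set.Icc 0 a) then
    { toFun := fun t => φ (clampIcc a t)
      mono' := fun s t hst =>
        h.2.1 (clampIcc_mem a s h.1) (clampIcc_mem a t h.1) (clampIcc_mono a hst)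
      right_continuous' := fun t =>
        ((h.2.2.comp_continuous (clampIcc_continuous a)
          (fun x => clampIcc_mem a x h.1)).continuousAt).continuousWithinAt }
  else StieltjesFunction.id

/-- The Lorentz space functional `‖f‖_{Λ(φ)} = ∫₀^a f*(t) dφ(t)` (with values in `ℝ≥0∞`). -/
def eLorentzNorm {E : Type*} [NormedAddCommGroup E] (φ : ℝ → ℝ) (a : ℝ) (f : ℝ → E) : ℝ≥0∞ :=
  ∫⁻ t in Set.Ioc (0:ℝ) a, ENNReal.ofReal (rearr a f t) ∂(stieltjesOfOn φ a).measure

/-- Membership in the Lorentz space `Λ(φ)[0,a]`. -/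
def MemLorentz {E : Type*} [NormedAddCommGroup E] [MeasurableSpace E]
    (φ : ℝ → ℝ) (a : ℝ) (f : ℝ → E) : Prop :=
  Measurable f ∧ eLorentzNorm φ a f < ⊤

/-- The Hardy–Lorentz space functional
`‖f‖_{H(Λ(φ))} = sup_{0 ≤ r < 1} ‖t ↦ f (r e^{it})‖_{Λ(φ)}` for functions on the unit disk. -/
def eHLNorm (φ : ℝ → ℝ) (f : ℂ → ℂ) : ℝ≥0∞ :=
  ⨆ r ∈ Set.Ico (0:ℝ) 1,
    eLorentzNorm φ (2 * Real.pi)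
      (fun t : ℝ => f (Complex.ofReal r * Complex.exp (Complex.I * Complex.ofReal t)))

/-- The classical `H¹` functional `‖f‖_{H¹} = sup_{0 ≤ r < 1} (1/(2π)) ∫₀^{2π} |f(r e^{it})| dt`. -/
def eH1Norm (f : ℂ → ℂ) : ℝ≥0∞ :=
  ⨆ r ∈ Set.Ico (0:ℝ) 1,
    (ENNReal.ofReal (2 * Real.pi))⁻¹ *
      ∫⁻ t in Set.Ioc (0:ℝ) (2 * Real.pi),
        ENNReal.ofReal ‖f (Complex.ofReal r * Complex.exp (Complex.I * Complex.ofReal t))‖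

/-- `fb` is the boundary (radial limit) function of `f`: for a.e. `t ∈ [0,2π]`,
`f(r e^{it}) → fb t` as `r → 1⁻`.  (For `f ∈ H¹` such a function exists and coincides a.e.
with the nontangential limit `f̃`.) -/
def HasRadialLimits (f : ℂ → ℂ) (fb : ℝ → ℂ) : Prop :=
  ∀ᵐ t ∂(volume.restrict (Set.Icc (0:ℝ) (2 * Real.pi))),
    Filter.Tendsto (fun r : ℝ => f (Complex.ofReal r * Complex.exp (Complex.I * Complex.ofReal t)))
      (nhdsWithin 1 (Set.Iio 1)) (nhds (fb t))

/-- `f` (with boundary function `fb`) is an outer function: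
`f` is non-null and `ln |f 0| = (1/(2π)) ∫₀^{2π} ln |fb s| ds`. -/
def IsOuter (f : ℂ → ℂ) (fb : ℝ → ℂ) : Prop :=
  (∃ z ∈ Metric.ball (0:ℂ) 1, f z ≠ 0) ∧
    Real.log ‖f 0‖ =
      (1 / (2 * Real.pi)) * ∫ s in Set.Ioc (0:ℝ) (2 * Real.pi), Real.log ‖fb s‖

/-- The set `E₊ = {t ∈ [0,a] : h t > 0}`. -/
def posSet (a : ℝ) (h : ℝ → ℝ) : Set ℝ := {t ∈ Set.Icc (0:ℝ) a | 0 < h t}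

/-- The set `E₋ = {t ∈ [0,a] : h t < 0}`. -/
def negSet (a : ℝ) (h : ℝ → ℝ) : Set ℝ := {t ∈ Set.Icc (0:ℝ) a | h t < 0}

section Basic

variable {a : ℝ} {f F : ℝ → ℂ} {τ t : ℝ}

lemma distrib_set_eq (a : ℝ) (f : ℝ → ℂ) (τ : ℝ) :
    {s ∈ Set.Icc (0:ℝ) a | τ < ‖f s‖} = Set.Icc (0:ℝ) a ∩ (fun s => ‖f s‖) ⁻¹' Set.Ioi τ := by
  ext s; simp [Set.mem_sep_iff, Set.mem_preimage, and_comm]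

lemma distrib_meas (hf : Measurable f) (a τ : ℝ) :
    MeasurableSet {s ∈ Set.Icc (0:ℝ) a | τ < ‖f s‖} := by
  rw [distrib_set_eq]
  exact measurableSet_Icc.inter (hf.norm measurableSet_Ioi)

lemma distrib_anti (a : ℝ) (f : ℝ → ℂ) : Antitone (distrib a f) := by
  intro τ τ' h
  apply measure_mono
  intro s hs
  exact ⟨hs.1, lt_of_le_of_lt h hs.2⟩

lemma distrib_le (ha : 0 ≤ a) (f : ℝ → ℂ) (τ : ℝ) :
    distrib a f τ ≤ ENNReal.ofReal a := by
  have : ENNReal.ofReal a = volume (Set.Icc (0:ℝ) a) := by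
    rw [Real.volume_Icc]; norm_num
  rw [this]
  exact measure_mono (fun s hs => hs.1)

lemma distrib_ne_top (ha : 0 ≤ a) (f : ℝ → ℂ) (τ : ℝ) : distrib a f τ ≠ ⊤ :=
  ((distrib_le ha f τ).trans_lt ENNReal.ofReal_lt_top).ne

lemma exists_distrib_le (ha : 0 ≤ a) (hf : Measurable f) (ht : 0 < t) :
    ∃ τ, 0 ≤ τ ∧ distrib a f τ ≤ ENNReal.ofReal t := by
  have htend : Tendsto (fun n : ℕ => distrib a f n) atTop
      (𝓝 (volume (⋂ n : ℕ, {s ∈ Set.Icc (0:ℝ) a | (n:ℝ) < ‖f s‖}))) := by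
    apply tendsto_measure_iInter_atTop
    · exact fun n => (distrib_meas hf a n).nullMeasurableSet
    · intro n m hnm
      exact fun s hs => ⟨hs.1, lt_of_le_of_lt (by exact_mod_cast hnm) hs.2⟩
    · exact ⟨0, by simpa [distrib] using distrib_ne_top ha f 0⟩
  have hempty : (⋂ n : ℕ, {s ∈ Set.Icc (0:ℝ) a | (n:ℝ) < ‖f s‖}) = ∅ := by
    ext s
    simp only [Set.mem_iInter, Set.mem_empty_iff_false, iff_false, not_forall]
    by_contra h
    push_neg at h
    obtain ⟨n, hn⟩ := exists_nat_gt ‖f s‖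
    exact absurd ((h n).2) (not_lt.2 hn.le)
    
  rw [hempty, measure_empty] at htend
  have : ∀ᶠ n : ℕ in atTop, distrib a f n < ENNReal.ofReal t :=
    htend.eventually_lt_const (by simpa using ht)
  obtain ⟨n, hn⟩ := this.exists
  exact ⟨n, Nat.cast_nonneg n, hn.le⟩

lemma rearr_nonneg (a : ℝ) (f : ℝ → ℂ) (t : ℝ) : 0 ≤ rearr a f t :=
  Real.sInf_nonneg (fun _ hτ => hτ.1)

lemma rearr_mem (ha : 0 ≤ a) (hf : Measurable f) (ht : 0 < t) :
    distrib a f (rearr a f t) ≤ ENNReal.ofReal t := by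
  have hne : {τ : ℝ | 0 ≤ τ ∧ distrib a f τ ≤ ENNReal.ofReal t}.Nonempty := by
    obtain ⟨τ, h0, h⟩ := exists_distrib_le ha hf ht; exact ⟨τ, h0, h⟩
  set r := rearr a f t with hr
  have hstep : ∀ n : ℕ, distrib a f (r + 1/(n+1)) ≤ ENNReal.ofReal t := by
    intro n
    obtain ⟨τ, hτ, hlt⟩ := Real.lt_sInf_add_pos hne
      (by positivity : (0:ℝ) < 1/(n+1))
    exact le_trans (distrib_anti a f hlt.le) hτ.2
  have hunion : {s ∈ Set.Icc (0:ℝ) a | r < ‖f s‖}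
      = ⋃ n : ℕ, {s ∈ Set.Icc (0:ℝ) a | r + 1/(n+1) < ‖f s‖} := by
    ext s
    simp only [Set.mem_iUnion, Set.mem_sep_iff]
    constructor
    · rintro ⟨hs, hlt⟩
      obtain ⟨n, hn⟩ := exists_nat_one_div_lt (sub_pos.2 hlt)
      exact ⟨n, hs, by linarith⟩
    · rintro ⟨n, hs, hlt⟩
      refine ⟨hs, lt_of_le_of_lt (le_add_of_nonneg_right (by positivity)) hlt⟩
  have hmono : Monotone fun n : ℕ => {s ∈ Set.Icc (0:ℝ) a | r + 1/(n+1) < ‖f s‖} := by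
    intro n m hnm s hs
    refine ⟨hs.1, lt_of_le_of_lt ?_ hs.2⟩
    have : (1:ℝ)/(m+1) ≤ 1/(n+1) := by
      apply one_div_le_one_div_of_le (by positivity)
      exact_mod_cast by omega
    linarith
  calc distrib a f r = volume (⋃ n : ℕ, {s ∈ Set.Icc (0:ℝ) a | r + 1/(n+1) < ‖f s‖}) := by
        rw [distrib, hunion]
    _ = ⨆ n : ℕ, distrib a f (r + 1/(n+1)) := hmono.measure_iUnion
    _ ≤ ENNReal.ofReal t := iSup_le hstep

lemma rearr_le (h0 : 0 ≤ τ) (h : distrib a f τ ≤ ENNReal.ofReal t) : rearr a f t ≤ τ :=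
  csInf_le ⟨0, fun _ hx => hx.1⟩ ⟨h0, h⟩

lemma lt_distrib_of_lt_rearr (h0 : 0 ≤ τ) (h : τ < rearr a f t) :
    ENNReal.ofReal t < distrib a f τ := by
  by_contra hc
  exact absurd (rearr_le h0 (not_lt.1 hc)) (not_le.2 h)

end Basic
section Comp

variable {a : ℝ} {f F : ℝ → ℂ} {τ t : ℝ}

/-- Key lemma: rearrangement of an increasing function of `‖f‖`. -/
lemma rearr_comp (ha : 0 ≤ a) (hf : Measurable f) {h : ℝ → ℝ}
    (hm : Monotone h) (hc : Continuous h) (h0 : h 0 = 0)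
    (hF : ∀ s ∈ Set.Icc (0:ℝ) a, ‖F s‖ = h ‖f s‖) (ht : 0 < t) :
    rearr a F t = h (rearr a f t) := by
  set r := rearr a f t with hrdef
  have hr0 : 0 ≤ r := rearr_nonneg a f t
  have hhr0 : 0 ≤ h r := h0 ▸ hm hr0
  have hsetF : ∀ τ', {s ∈ Set.Icc (0:ℝ) a | τ' < ‖F s‖}
      = {s ∈ Set.Icc (0:ℝ) a | τ' < h ‖f s‖} := by
    intro τ'; ext s
    simp only [Set.mem_sep_iff, and_congr_right_iff]
    intro hs; rw [hF s hs]
  -- membership: h r ∈ S_F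
  have hmem : distrib a F (h r) ≤ ENNReal.ofReal t := by
    have hsub : {s ∈ Set.Icc (0:ℝ) a | h r < ‖F s‖}
        ⊆ {s ∈ Set.Icc (0:ℝ) a | r < ‖f s‖} := by
      intro s hs
      rw [hsetF] at hs
      refine ⟨hs.1, ?_⟩
      by_contra hcon
      exact absurd (hm (not_lt.1 hcon)) (not_le.2 hs.2)
    exact le_trans (measure_mono hsub) (rearr_mem ha hf ht)
  refine le_antisymm (rearr_le hhr0 hmem) ?_
  -- lower bound
  show h r ≤ sInf {τ : ℝ | 0 ≤ τ ∧ distrib a F τ ≤ ENNReal.ofReal t}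
  have hne : {τ : ℝ | 0 ≤ τ ∧ distrib a F τ ≤ ENNReal.ofReal t}.Nonempty :=
    ⟨h r, ⟨hhr0, hmem⟩⟩
  apply le_csInf hne
  rintro τ' ⟨hτ'0, hτ'⟩
  by_contra hcon
  push_neg at hcon
  -- τ' < h r ; find c < r with distrib a f c ≤ distrib a F τ'
  set C := Set.Icc (0:ℝ) r ∩ h ⁻¹' Set.Iic τ' with hC
  have hCne : C.Nonempty := ⟨0, ⟨le_refl 0, hr0⟩, by simpa [h0] using hτ'0⟩
  have hCbdd : BddAbove C := ⟨r, fun x hx => hx.1.2⟩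
  have hCclosed : IsClosed C := (isClosed_Icc).inter (isClosed_Iic.preimage hc)
  set c := sSup C with hc'
  have hcC : c ∈ C := hCclosed.csSup_mem hCne hCbdd
  have hcr : c < r := lt_of_le_of_ne hcC.1.2 (fun he => absurd (he ▸ hcC.2) (not_le.2 hcon))
  have hsub : {s ∈ Set.Icc (0:ℝ) a | c < ‖f s‖}
      ⊆ {s ∈ Set.Icc (0:ℝ) a | τ' < ‖F s‖} := by
    intro s hs
    rw [hsetF]
    refine ⟨hs.1, ?_⟩
    by_contra hcon2
    push_neg at hcon2
    rcases le_or_gt ‖f s‖ r with hle | hlt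
    · have : ‖f s‖ ∈ C := ⟨⟨norm_nonneg _, hle⟩, hcon2⟩
      exact absurd (le_csSup hCbdd this) (not_le.2 hs.2)
    · exact absurd (le_trans (hm hlt.le) hcon2) (not_le.2 hcon)
  have hlt := lt_distrib_of_lt_rearr hcC.1.1 hcr
  have hle : distrib a f c ≤ ENNReal.ofReal t := le_trans (measure_mono hsub) hτ'
  exact absurd hle (not_le.2 hlt)

lemma rearr_antitoneOn (ha : 0 ≤ a) (hf : Measurable f) :
    AntitoneOn (rearr a f) (Set.Ioi (0:ℝ)) := by
  intro t ht t' ht' htt'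
  have hne : {τ : ℝ | 0 ≤ τ ∧ distrib a f τ ≤ ENNReal.ofReal t}.Nonempty :=
    exists_distrib_le ha hf ht
  apply csInf_le_csInf ⟨0, fun x hx => hx.1⟩ hne
  rintro τ ⟨h0, hle⟩
  exact ⟨h0, hle.trans (ENNReal.ofReal_le_ofReal htt')⟩

/-- A measurable modification of `rearr` agreeing with it on `Ioi 0`. -/
lemma rearr_mod_measurable (ha : 0 ≤ a) (hf : Measurable f) :
    Measurable (fun t => if 0 < t then rearr a f t else 0) := by
  apply measurable_of_Iio
  intro x
  have : (fun t => if 0 < t then rearr a f t else 0) ⁻¹' Set.Iio x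
      = (Set.Ioi 0 ∩ {t | rearr a f t < x}) ∪ (if 0 < x then Set.Iic 0 else ∅) := by
    ext t
    by_cases h : (0:ℝ) < t
    · simp [h, Set.mem_preimage, apply_ite (fun s : Set ℝ => t ∈ s), not_le.2 h]
    · simp [h, Set.mem_preimage, apply_ite (fun s : Set ℝ => t ∈ s), not_lt.1 h]
  rw [this]
  apply MeasurableSet.union
  · have : Set.OrdConnected (Set.Ioi (0:ℝ) ∩ {t | rearr a f t < x}) := by
      constructor
      rintro t1 ⟨ht1, hr1⟩ t2 ⟨ht2, hr2⟩ t ⟨hle1, hle2⟩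
      have htpos : (0:ℝ) < t := lt_of_lt_of_le ht1 hle1
      refine ⟨htpos, ?_⟩
      show rearr a f t < x
      exact lt_of_le_of_lt (rearr_antitoneOn ha hf ht1 htpos hle1) hr1
    exact this.measurableSet
  · split <;> simp

end Comp
section Stieltjes

variable {a : ℝ} {φ : ℝ → ℝ}

lemma stieltjesOfOn_apply (hcond : 0 ≤ a ∧ MonotoneOn φ (Set.Icc 0 a) ∧
    ContinuousOn φ (Set.Icc 0 a)) (x : ℝ) :
    stieltjesOfOn φ a x = φ (clampIcc a x) := by
  rw [stieltjesOfOn, dif_pos hcond]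

lemma stieltjesOfOn_continuous (hcond : 0 ≤ a ∧ MonotoneOn φ (Set.Icc 0 a) ∧
    ContinuousOn φ (Set.Icc 0 a)) : Continuous (stieltjesOfOn φ a) := by
  have : ⇑(stieltjesOfOn φ a) = fun x => φ (clampIcc a x) := funext (stieltjesOfOn_apply hcond)
  rw [this]
  exact hcond.2.2.comp_continuous (clampIcc_continuous a) (fun x => clampIcc_mem a x hcond.1)

lemma clampIcc_of_mem (hx : x ∈ Set.Icc (0:ℝ) a) : clampIcc a x = x := by
  rw [clampIcc, max_eq_left hx.1, min_eq_left hx.2]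

lemma stieltjesOfOn_measure_Ioc (hcond : 0 ≤ a ∧ MonotoneOn φ (Set.Icc 0 a) ∧
    ContinuousOn φ (Set.Icc 0 a)) (hφ0 : φ 0 = 0) {x : ℝ} (hx : x ∈ Set.Icc (0:ℝ) a) :
    (stieltjesOfOn φ a).measure (Set.Ioc 0 x) = ENNReal.ofReal (φ x) := by
  rw [StieltjesFunction.measure_Ioc, stieltjesOfOn_apply hcond, stieltjesOfOn_apply hcond,
    clampIcc_of_mem hx, clampIcc_of_mem (Set.left_mem_Icc.2 hcond.1), hφ0, sub_zero]

lemma stieltjesOfOn_measure_Ioo (hcond : 0 ≤ a ∧ MonotoneOn φ (Set.Icc 0 a) ∧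
    ContinuousOn φ (Set.Icc 0 a)) (hφ0 : φ 0 = 0) {x : ℝ} (hx : x ∈ Set.Icc (0:ℝ) a) :
    (stieltjesOfOn φ a).measure (Set.Ioo 0 x) = ENNReal.ofReal (φ x) := by
  rw [StieltjesFunction.measure_Ioo]
  have hll : Function.leftLim (stieltjesOfOn φ a) x = stieltjesOfOn φ a x := by
    apply leftLim_eq_of_tendsto
    exact ((stieltjesOfOn_continuous hcond).tendsto x).mono_left nhdsWithin_le_nhds
  rw [hll, stieltjesOfOn_apply hcond, stieltjesOfOn_apply hcond,
    clampIcc_of_mem hx, clampIcc_of_mem (Set.left_mem_Icc.2 hcond.1), hφ0, sub_zero]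

end Stieltjes
section Trunc

variable {a : ℝ} {φ : ℝ → ℝ} {f : ℝ → ℂ}

/-- The truncated Lorentz functional. -/
def trunc (φ : ℝ → ℝ) (a : ℝ) (f : ℝ → ℂ) (l : ℝ) : ℝ≥0∞ :=
  ∫⁻ t in Set.Ioc (0:ℝ) a, ENNReal.ofReal (min (rearr a f t) l) ∂(stieltjesOfOn φ a).measure

lemma rearr_aux_aemeasurable (ha : 0 ≤ a) (hf : Measurable f) (g : ℝ → ℝ)
    (hg : Measurable g) :
    AEMeasurable (fun t => ENNReal.ofReal (g (rearr a f t)))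
      ((stieltjesOfOn φ a).measure.restrict (Set.Ioc 0 a)) := by
  refine ⟨fun t => ENNReal.ofReal (g (if 0 < t then rearr a f t else 0)), ?_, ?_⟩
  · exact (hg.comp (rearr_mod_measurable ha hf)).ennreal_ofReal
  · refine (ae_restrict_iff' measurableSet_Ioc).2 (Filter.Eventually.of_forall ?_)
    intro t ht
    simp [ht.1]

lemma trunc_aemeasurable (ha : 0 ≤ a) (hf : Measurable f) (l : ℝ) :
    AEMeasurable (fun t => ENNReal.ofReal (min (rearr a f t) l))
      ((stieltjesOfOn φ a).measure.restrict (Set.Ioc 0 a)) :=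
  rearr_aux_aemeasurable ha hf (fun x => min x l) (measurable_id.min measurable_const)

lemma trunc_le_norm (φ : ℝ → ℝ) (a : ℝ) (f : ℝ → ℂ) (l : ℝ) :
    trunc φ a f l ≤ eLorentzNorm φ a f :=
  lintegral_mono (fun t => ENNReal.ofReal_le_ofReal (min_le_left _ _))

lemma trunc_zero (φ : ℝ → ℝ) (a : ℝ) (f : ℝ → ℂ) : trunc φ a f 0 = 0 := by
  rw [trunc]
  rw [← lintegral_zero (μ := (stieltjesOfOn φ a).measure.restrict (Set.Ioc 0 a))]
  apply lintegral_congr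
  intro t
  simp [ENNReal.ofReal_eq_zero, min_le_right]

lemma measure_Ioc_total (hcond : 0 ≤ a ∧ MonotoneOn φ (Set.Icc 0 a) ∧
    ContinuousOn φ (Set.Icc 0 a)) (hφ0 : φ 0 = 0) (hφa : φ a = 1) :
    (stieltjesOfOn φ a).measure (Set.Ioc 0 a) = 1 := by
  rw [stieltjesOfOn_measure_Ioc hcond hφ0 (Set.right_mem_Icc.2 hcond.1), hφa,
    ENNReal.ofReal_one]

lemma trunc_lipschitz (hcond : 0 ≤ a ∧ MonotoneOn φ (Set.Icc 0 a) ∧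
    ContinuousOn φ (Set.Icc 0 a)) (hφ0 : φ 0 = 0) (hφa : φ a = 1)
    {l l' : ℝ} (h : l ≤ l') :
    trunc φ a f l' ≤ trunc φ a f l + ENNReal.ofReal (l' - l) := by
  have hpw : ∀ t, ENNReal.ofReal (min (rearr a f t) l')
      ≤ ENNReal.ofReal (min (rearr a f t) l) + ENNReal.ofReal (l' - l) := by
    intro t
    calc ENNReal.ofReal (min (rearr a f t) l')
        ≤ ENNReal.ofReal (min (rearr a f t) l + (l' - l)) := by
          apply ENNReal.ofReal_le_ofReal
          rcases le_total (rearr a f t) l with hc | hc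
          · rcases le_total (rearr a f t) l' with hc' | hc' <;>
              simp [min_eq_left, hc, hc'] <;> linarith
          · rw [min_eq_right hc]
            rcases le_total (rearr a f t) l' with hc' | hc' <;>
              simp [min_eq_left hc', min_eq_right hc'] <;> linarith
      _ ≤ _ := ENNReal.ofReal_add_le
  calc trunc φ a f l' ≤ ∫⁻ t in Set.Ioc (0:ℝ) a,
        (ENNReal.ofReal (min (rearr a f t) l) + ENNReal.ofReal (l' - l))
          ∂(stieltjesOfOn φ a).measure := lintegral_mono hpw
    _ = trunc φ a f l + ENNReal.ofReal (l' - l) * ((stieltjesOfOn φ a).measure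
          (Set.Ioc 0 a)) := by
        rw [lintegral_add_right _ measurable_const, trunc]
        simp [Measure.restrict_apply MeasurableSet.univ]
    _ = _ := by rw [measure_Ioc_total hcond hφ0 hφa, mul_one]

lemma trunc_mono (φ : ℝ → ℝ) (a : ℝ) (f : ℝ → ℂ) : Monotone (trunc φ a f) := by
  intro l l' h
  exact lintegral_mono fun t => ENNReal.ofReal_le_ofReal (min_le_min le_rfl h)

lemma trunc_sup (ha : 0 ≤ a) (hf : Measurable f) :
    ⨆ n : ℕ, trunc φ a f n = eLorentzNorm φ a f := by
  rw [eLorentzNorm]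
  simp only [trunc]
  rw [← lintegral_iSup' (fun n => trunc_aemeasurable ha hf n)
    (Filter.Eventually.of_forall fun t n m hnm =>
      ENNReal.ofReal_le_ofReal (min_le_min le_rfl (by exact_mod_cast hnm)))]
  apply lintegral_congr
  intro t
  have hr := rearr_nonneg a f t
  apply le_antisymm
  · apply iSup_le
    intro n
    exact ENNReal.ofReal_le_ofReal (min_le_left _ _)
  · obtain ⟨n, hn⟩ := exists_nat_gt (rearr a f t)
    calc ENNReal.ofReal (rearr a f t) = ENNReal.ofReal (min (rearr a f t) n) := by
          rw [min_eq_left hn.le]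
      _ ≤ ⨆ n : ℕ, ENNReal.ofReal (min (rearr a f t) n) :=
          le_iSup (fun n : ℕ => ENNReal.ofReal (min (rearr a f t) n)) n

/-- There is a level `l > 0` at which the truncated functional is exactly `1/2`. -/
lemma exists_half_level (hcond : 0 ≤ a ∧ MonotoneOn φ (Set.Icc 0 a) ∧
    ContinuousOn φ (Set.Icc 0 a)) (hφ0 : φ 0 = 0) (hφa : φ a = 1)
    (hf : Measurable f) (hnorm : eLorentzNorm φ a f = 1) :
    ∃ l : ℝ, 0 < l ∧ trunc φ a f l = 2⁻¹ := by
  have hle1 : ∀ l, trunc φ a f l ≤ 1 := fun l => (trunc_le_norm φ a f l).trans_eq hnorm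
  have hfin : ∀ l, trunc φ a f l ≠ ⊤ := fun l => ((hle1 l).trans_lt ENNReal.one_lt_top).ne
  set Ar : ℝ → ℝ := fun l => (trunc φ a f l).toReal with hAr
  have hmono : MonotoneOn Ar (Set.Ici 0) := by
    intro l hl l' hl' h
    exact ENNReal.toReal_mono (hfin l') (trunc_mono φ a f h)
  have hlip : ∀ l l', l ≤ l' → Ar l' - Ar l ≤ l' - l := by
    intro l l' h
    have h1 := trunc_lipschitz (f := f) hcond hφ0 hφa h
    have h2 : Ar l' ≤ Ar l + (l' - l) := by
      have := ENNReal.toReal_mono (by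
          exact ENNReal.add_ne_top.2 ⟨hfin l, ENNReal.ofReal_ne_top⟩) h1
      rw [ENNReal.toReal_add (hfin l) ENNReal.ofReal_ne_top] at this
      calc Ar l' ≤ Ar l + (ENNReal.ofReal (l' - l)).toReal := this
        _ ≤ Ar l + (l' - l) := by
            gcongr
            rw [ENNReal.toReal_ofReal (by linarith)]
    linarith
  have hmono' : Monotone Ar := fun l l' h =>
    ENNReal.toReal_mono (hfin l') (trunc_mono φ a f h)
  have hcont : Continuous Ar := by
    apply LipschitzWith.continuous (K := 1)
    apply LipschitzWith.of_dist_le_mul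
    have key : ∀ l l', l ≤ l' → |Ar l' - Ar l| ≤ |l' - l| := by
      intro l l' h
      rw [abs_of_nonneg (sub_nonneg.2 (hmono' h)), abs_of_nonneg (sub_nonneg.2 h)]
      exact hlip l l' h
    intro l l'
    rw [NNReal.coe_one, one_mul, Real.dist_eq, Real.dist_eq]
    rcases le_total l l' with h | h
    · rw [abs_sub_comm (Ar l), abs_sub_comm l]
      exact key l l' h
    · exact key l' l h
  obtain ⟨n, hn⟩ : ∃ n : ℕ, (2:ℝ)⁻¹ ≤ Ar n := by
    by_contra hcon
    push_neg at hcon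
    have hsup := trunc_sup (f := f) (φ := φ) hcond.1 hf
    rw [hnorm] at hsup
    have : (1:ℝ≥0∞) ≤ ENNReal.ofReal 2⁻¹ := by
      rw [← hsup]
      apply iSup_le
      intro n
      rw [← ENNReal.ofReal_toReal (hfin n)]
      exact ENNReal.ofReal_le_ofReal (hcon n).le
    have h2 : ENNReal.ofReal (2⁻¹:ℝ) < 1 := ENNReal.ofReal_lt_one.2 (by norm_num)
    exact absurd this (not_le.2 h2)
  have hAr0 : Ar 0 = 0 := by simp [hAr, trunc_zero]
  have hivt := intermediate_value_Icc (Nat.cast_nonneg n) hcont.continuousOn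
  have hmem : (2⁻¹:ℝ) ∈ Set.Icc (Ar 0) (Ar n) := ⟨by rw [hAr0]; norm_num, hn⟩
  obtain ⟨l, hl, hAl⟩ := hivt hmem
  refine ⟨l, ?_, ?_⟩
  · rcases eq_or_lt_of_le hl.1 with he | h
    · rw [← he, hAr0] at hAl
      norm_num at hAl
    · exact h
  · rw [← ENNReal.ofReal_toReal (hfin l)]
    show ENNReal.ofReal (Ar l) = 2⁻¹
    rw [hAl]
    rw [show ((2:ℝ)⁻¹) = ((2:ℝ≥0∞)⁻¹).toReal by norm_num]
    rw [ENNReal.ofReal_toReal (by norm_num)]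

end Trunc
section PartA

variable {a : ℝ} {φ : ℝ → ℝ} {f : ℝ → ℂ}

lemma min_one_div_mul {l : ℝ} (hl : 0 ≤ l) (n : ℝ) (hn : 0 ≤ n) :
    min 1 (l / n) * n = min n l := by
  rcases eq_or_lt_of_le hn with h0 | h0
  · simp [← h0, min_eq_left hl]
  · rw [min_mul_of_nonneg _ _ h0.le, one_mul, div_mul_cancel₀ _ h0.ne']

lemma ae_two_valued (ha : 0 < a)
    (hcond : 0 ≤ a ∧ MonotoneOn φ (Set.Icc 0 a) ∧ ContinuousOn φ (Set.Icc 0 a))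
    (hφ0 : φ 0 = 0) (hφa : φ a = 1)
    (hf : Measurable f) (hnorm : eLorentzNorm φ a f = 1)
    (hext : ∀ g : ℝ → ℂ, Measurable g →
      eLorentzNorm φ a (f + g) ≤ 1 → eLorentzNorm φ a (f - g) ≤ 1 →
      g =ᵐ[volume.restrict (Set.Icc (0:ℝ) a)] 0) :
    ∃ c : ℝ, 0 < c ∧
      ∀ᵐ s ∂(volume.restrict (Set.Icc (0:ℝ) a)), f s = 0 ∨ ‖f s‖ = c := by
  obtain ⟨l, hl, hAl⟩ := exists_half_level hcond hφ0 hφa hf hnorm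
  set m : ℝ → ℝ := fun s => min 1 (l / ‖f s‖) with hm
  have hm0 : ∀ s, 0 ≤ m s := fun s => le_min zero_le_one (div_nonneg hl.le (norm_nonneg _))
  have hm1 : ∀ s, m s ≤ 1 := fun s => min_le_left _ _
  have hmmul : ∀ s, m s * ‖f s‖ = min ‖f s‖ l := fun s =>
    min_one_div_mul hl.le _ (norm_nonneg _)
  set g : ℝ → ℂ := fun s => ((2 * m s - 1 : ℝ) : ℂ) * f s with hg
  have hgm : Measurable g := by
    apply Measurable.mul _ hf
    apply Complex.measurable_ofReal.comp
    apply Measurable.sub _ measurable_const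
    exact (measurable_const.min (measurable_const.div hf.norm)).const_mul 2
  -- pointwise norms
  have hfg1 : ∀ s, ‖(f + g) s‖ = 2 * min ‖f s‖ l := by
    intro s
    have : (f + g) s = ((2 * m s : ℝ) : ℂ) * f s := by
      simp only [Pi.add_apply, hg]
      push_cast
      ring
    rw [this, norm_mul, Complex.norm_real, Real.norm_eq_abs,
      abs_of_nonneg (by positivity : (0:ℝ) ≤ 2 * m s), mul_assoc, hmmul]
  have hfg2 : ∀ s, ‖(f - g) s‖ = 2 * max (‖f s‖ - l) 0 := by
    intro s
    have : (f - g) s = ((2 - 2 * m s : ℝ) : ℂ) * f s := by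
      simp only [Pi.sub_apply, hg]
      push_cast
      ring
    rw [this, norm_mul, Complex.norm_real, Real.norm_eq_abs,
      abs_of_nonneg (by nlinarith [hm1 s] : (0:ℝ) ≤ 2 - 2 * m s)]
    have : (2 - 2 * m s) * ‖f s‖ = 2 * ‖f s‖ - 2 * (m s * ‖f s‖) := by ring
    rw [this, hmmul]
    rcases le_total ‖f s‖ l with h | h
    · rw [min_eq_left h, max_eq_right (by linarith)]; ring
    · rw [min_eq_right h, max_eq_left (by linarith)]; ring
  -- rearrangements
  have hr1 : ∀ t ∈ Set.Ioc (0:ℝ) a, rearr a (f + g) t = 2 * min (rearr a f t) l := by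
    intro t ht
    have hmono1 : Monotone (fun x : ℝ => 2 * min x l) := by
      apply Monotone.const_mul _ (by norm_num : (0:ℝ) ≤ 2)
      exact monotone_id.min monotone_const
    have hcont1 : Continuous (fun x : ℝ => 2 * min x l) := by
      exact Continuous.mul continuous_const (continuous_id.min continuous_const)
    exact rearr_comp ha.le hf hmono1 hcont1 (by simp [min_eq_left hl.le])
      (fun s _ => hfg1 s) ht.1
  have hr2 : ∀ t ∈ Set.Ioc (0:ℝ) a, rearr a (f - g) t = 2 * max (rearr a f t - l) 0 := by
    intro t ht
    have hmono2 : Monotone (fun x : ℝ => 2 * max (x - l) 0) := by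
      apply Monotone.const_mul _ (by norm_num : (0:ℝ) ≤ 2)
      exact fun x y h => max_le_max (by linarith) le_rfl
    have hcont2 : Continuous (fun x : ℝ => 2 * max (x - l) 0) := by
      apply Continuous.mul continuous_const
      exact (continuous_id.sub continuous_const).max continuous_const
    exact rearr_comp ha.le hf hmono2 hcont2
      (by simp [max_eq_right (by linarith : -l ≤ 0)])
      (fun s _ => hfg2 s) ht.1
  -- norm of f + g
  set μ := (stieltjesOfOn φ a).measure with hμ
  have hnorm1 : eLorentzNorm φ a (f + g) = 1 := by
    rw [eLorentzNorm]
    have : ∫⁻ t in Set.Ioc (0:ℝ) a, ENNReal.ofReal (rearr a (f + g) t) ∂μ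
        = ∫⁻ t in Set.Ioc (0:ℝ) a, 2 * ENNReal.ofReal (min (rearr a f t) l) ∂μ := by
      apply lintegral_congr_ae
      refine (ae_restrict_iff' measurableSet_Ioc).2 (Filter.Eventually.of_forall ?_)
      intro t ht
      show ENNReal.ofReal (rearr a (f + g) t) = 2 * ENNReal.ofReal (min (rearr a f t) l)
      rw [hr1 t ht, ENNReal.ofReal_mul (by norm_num)]
      norm_num
    rw [this, lintegral_const_mul' 2 _ (by norm_num)]
    show 2 * trunc φ a f l = 1
    rw [hAl, ENNReal.mul_inv_cancel (by norm_num) (by norm_num)]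
  -- the complementary piece has mass 1/2
  have hsplit : trunc φ a f l + (∫⁻ t in Set.Ioc (0:ℝ) a,
      ENNReal.ofReal (max (rearr a f t - l) 0) ∂μ) = 1 := by
    rw [← hnorm]
    rw [eLorentzNorm, trunc]
    rw [← lintegral_add_left' (trunc_aemeasurable ha.le hf l)]
    apply lintegral_congr
    intro t
    rw [← ENNReal.ofReal_add (le_min (rearr_nonneg a f t) hl.le) (le_max_right _ _)]
    congr 1
    rcases le_total (rearr a f t) l with h | h
    · rw [min_eq_left h, max_eq_right (by linarith)]; ring
    · rw [min_eq_right h, max_eq_left (by linarith)]; ring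
  have hB : (∫⁻ t in Set.Ioc (0:ℝ) a,
      ENNReal.ofReal (max (rearr a f t - l) 0) ∂μ) = 2⁻¹ := by
    rw [hAl] at hsplit
    have h11 : (1:ℝ≥0∞) = 2⁻¹ + 2⁻¹ := by
      rw [ENNReal.inv_two_add_inv_two]
    rw [h11] at hsplit
    exact (ENNReal.add_right_inj (by norm_num)).1 hsplit
  have hnorm2 : eLorentzNorm φ a (f - g) = 1 := by
    rw [eLorentzNorm]
    have : ∫⁻ t in Set.Ioc (0:ℝ) a, ENNReal.ofReal (rearr a (f - g) t) ∂μ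
        = ∫⁻ t in Set.Ioc (0:ℝ) a, 2 * ENNReal.ofReal (max (rearr a f t - l) 0) ∂μ := by
      apply lintegral_congr_ae
      refine (ae_restrict_iff' measurableSet_Ioc).2 (Filter.Eventually.of_forall ?_)
      intro t ht
      show ENNReal.ofReal (rearr a (f - g) t)
          = 2 * ENNReal.ofReal (max (rearr a f t - l) 0)
      rw [hr2 t ht, ENNReal.ofReal_mul (by norm_num)]
      norm_num
    rw [this, lintegral_const_mul' 2 _ (by norm_num), hB,
      ENNReal.mul_inv_cancel (by norm_num) (by norm_num)]
  -- extremality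
  have hg0 := hext g hgm hnorm1.le hnorm2.le
  refine ⟨2 * l, by linarith, ?_⟩
  filter_upwards [hg0] with s hs
  rw [Pi.zero_apply, hg] at hs
  rcases mul_eq_zero.1 hs with hc | hc
  · by_cases hfs : f s = 0
    · exact Or.inl hfs
    · right
      have hc' : 2 * m s - 1 = 0 := by exact_mod_cast hc
      have hms : m s = 2⁻¹ := by linarith
      have hns : 0 < ‖f s‖ := norm_pos_iff.2 hfs
      have hmin : min 1 (l / ‖f s‖) = 2⁻¹ := hms
      rcases le_total 1 (l / ‖f s‖) with h | h
      · rw [min_eq_left h] at hmin; norm_num at hmin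
      · rw [min_eq_right h] at hmin
        have := (div_eq_iff hns.ne').1 hmin
        linarith
  · exact Or.inl hc

end PartA
/-- Let `φ` be increasing, concave, continuous on `[0,a]` with
`φ 0 = 0`, `φ a = 1`.  Every extreme point `f` of the closed unit ball of `Λ(φ)[0,a]`
has the form `f = (ε / φ(m E)) χ_E` with `E ⊆ [0,a]` measurable of positive measure and
`|ε| = 1` a.e. -/
theorem extreme_point_form (a : ℝ) (ha : 0 < a) (φ : ℝ → ℝ)
    (hconc : ConcaveOn ℝ (Set.Icc 0 a) φ)
    (hcont : ContinuousOn φ (Set.Icc 0 a))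
    (hmono : MonotoneOn φ (Set.Icc 0 a))
    (hφ0 : φ 0 = 0) (hφa : φ a = 1)
    (f : ℝ → ℂ) (hf : Measurable f)
    (hnorm : eLorentzNorm φ a f = 1)
    (hext : ∀ g : ℝ → ℂ, Measurable g →
      eLorentzNorm φ a (f + g) ≤ 1 → eLorentzNorm φ a (f - g) ≤ 1 →
      g =ᵐ[volume.restrict (Set.Icc (0:ℝ) a)] 0) :
    ∃ E : Set ℝ, MeasurableSet E ∧ E ⊆ Set.Icc (0:ℝ) a ∧ 0 < volume E ∧
      ∃ ε : ℝ → ℂ, Measurable ε ∧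
        (∀ᵐ t ∂(volume.restrict (Set.Icc (0:ℝ) a)), ‖ε t‖ = 1) ∧
        (∀ᵐ t ∂(volume.restrict (Set.Icc (0:ℝ) a)),
          f t = Set.indicator E (fun s => ε s / (φ ((volume E).toReal) : ℂ)) t) := by
  have hcond : 0 ≤ a ∧ MonotoneOn φ (Set.Icc 0 a) ∧ ContinuousOn φ (Set.Icc 0 a) :=
    ⟨ha.le, hmono, hcont⟩
  obtain ⟨c, hc, hae⟩ := ae_two_valued ha hcond hφ0 hφa hf hnorm hext
  set μ := (stieltjesOfOn φ a).measure with hμ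
  set E : Set ℝ := Set.Icc (0:ℝ) a ∩ {s | f s ≠ 0} with hE
  have hEmeas : MeasurableSet E :=
    measurableSet_Icc.inter (hf (measurableSet_singleton 0)).compl
  have hEsub : E ⊆ Set.Icc (0:ℝ) a := fun s hs => hs.1
  set D := volume E with hD
  have hDle : D ≤ ENNReal.ofReal a := by
    have : ENNReal.ofReal a = volume (Set.Icc (0:ℝ) a) := by
      rw [Real.volume_Icc]; norm_num
    rw [this]
    exact measure_mono hEsub
  have hDfin : D ≠ ⊤ := (hDle.trans_lt ENNReal.ofReal_lt_top).ne
  -- the set appearing in `distrib a f 0` is exactly `E`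
  have hset0 : {s ∈ Set.Icc (0:ℝ) a | (0:ℝ) < ‖f s‖} = E := by
    ext s
    simp only [Set.mem_sep_iff, hE, Set.mem_inter_iff, Set.mem_setOf_eq,
      norm_pos_iff]
  -- positivity of D
  have hD0 : 0 < D := by
    rcases (zero_le : (0:ℝ≥0∞) ≤ D).lt_or_eq with h | h
    · exact h
    have hzero : ∀ t ∈ Set.Ioc (0:ℝ) a, rearr a f t = 0 := by
      intro t ht
      refine le_antisymm (rearr_le le_rfl ?_) (rearr_nonneg a f t)
      rw [distrib, hset0, ← hD, ← h]
      exact zero_le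
    have : eLorentzNorm φ a f = 0 := by
      rw [eLorentzNorm]
      rw [← lintegral_zero (μ := μ.restrict (Set.Ioc (0:ℝ) a))]
      apply lintegral_congr_ae
      refine (ae_restrict_iff' measurableSet_Ioc).2 (Filter.Eventually.of_forall ?_)
      intro t ht
      simp [hzero t ht]
    rw [this] at hnorm
    norm_num at hnorm
  have hae' : ∀ᵐ s ∂volume, s ∈ Set.Icc (0:ℝ) a → (f s = 0 ∨ ‖f s‖ = c) :=
    (ae_restrict_iff' measurableSet_Icc).1 hae
  -- distribution function values
  have hdist_lt : ∀ τ : ℝ, 0 ≤ τ → τ < c → distrib a f τ = D := by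
    intro τ h0 hτc
    rw [distrib, hD]
    apply measure_congr
    rw [Filter.eventuallyEq_set]
    filter_upwards [hae'] with s hs
    simp only [Set.mem_sep_iff, hE, Set.mem_inter_iff, Set.mem_setOf_eq]
    constructor
    · rintro ⟨h1, h2⟩
      exact ⟨h1, fun hz => by rw [hz] at h2; simp at h2; linarith⟩
    · rintro ⟨h1, h2⟩
      rcases hs h1 with h | h
      · exact absurd h h2
      · exact ⟨h1, h ▸ hτc⟩
  have hdist_ge : ∀ τ : ℝ, c ≤ τ → distrib a f τ = 0 := by
    intro τ hcτ
    rw [distrib]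
    have hsub : {s | s ∈ Set.Icc (0:ℝ) a ∧ τ < ‖f s‖}
        ⊆ {s | ¬(s ∈ Set.Icc (0:ℝ) a → (f s = 0 ∨ ‖f s‖ = c))} := by
      rintro s ⟨h1, h2⟩
      simp only [Set.mem_setOf_eq]
      intro hP
      rcases hP h1 with h | h
      · rw [h] at h2; simp at h2; linarith
      · rw [h] at h2; linarith
    exact measure_mono_null hsub hae'
  set d := D.toReal with hd
  have hd0 : 0 < d := ENNReal.toReal_pos hD0.ne' hDfin
  have hda : d ≤ a := by
    rw [hd]
    calc D.toReal ≤ (ENNReal.ofReal a).toReal := ENNReal.toReal_mono ENNReal.ofReal_ne_top hDle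
      _ = a := ENNReal.toReal_ofReal ha.le
  -- rearrangement values
  have hrearr : ∀ t ∈ Set.Ioc (0:ℝ) a, rearr a f t = if t < d then c else 0 := by
    intro t ht
    by_cases h : t < d
    · rw [if_pos h]
      have hlt : ENNReal.ofReal t < D := (ENNReal.ofReal_lt_iff_lt_toReal ht.1.le hDfin).2 h
      refine le_antisymm (rearr_le hc.le (by rw [hdist_ge c le_rfl]; exact zero_le)) ?_
      show c ≤ sInf {τ : ℝ | 0 ≤ τ ∧ distrib a f τ ≤ ENNReal.ofReal t}
      have hmemc : c ∈ {τ : ℝ | 0 ≤ τ ∧ distrib a f τ ≤ ENNReal.ofReal t} :=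
        ⟨hc.le, by rw [hdist_ge c le_rfl]; exact zero_le⟩
      apply le_csInf ⟨c, hmemc⟩
      rintro τ ⟨hτ0, hτ⟩
      by_contra hcon
      push_neg at hcon
      rw [hdist_lt τ hτ0 hcon] at hτ
      exact absurd (lt_of_lt_of_le hlt hτ) (lt_irrefl _)
    · rw [if_neg h]
      push_neg at h
      have hDle' : D ≤ ENNReal.ofReal t := by
        rw [← ENNReal.ofReal_toReal hDfin]
        exact ENNReal.ofReal_le_ofReal h
      refine le_antisymm (rearr_le le_rfl ?_) (rearr_nonneg a f t)
      rw [hdist_lt 0 le_rfl hc]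
      exact hDle'
  -- norm computation
  have hIoosub : Set.Ioo (0:ℝ) d ⊆ Set.Ioc 0 a :=
    fun x hx => ⟨hx.1, hx.2.le.trans hda⟩
  have hnormval : eLorentzNorm φ a f
      = ENNReal.ofReal c * ENNReal.ofReal (φ d) := by
    rw [eLorentzNorm]
    have h1 : ∫⁻ t in Set.Ioc (0:ℝ) a, ENNReal.ofReal (rearr a f t) ∂μ
        = ∫⁻ t in Set.Ioc (0:ℝ) a,
            Set.indicator (Set.Ioo (0:ℝ) d) (fun _ => ENNReal.ofReal c) t ∂μ := by
      apply lintegral_congr_ae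
      refine (ae_restrict_iff' measurableSet_Ioc).2 (Filter.Eventually.of_forall ?_)
      intro t ht
      show ENNReal.ofReal (rearr a f t) = _
      rw [hrearr t ht]
      by_cases h : t < d
      · rw [if_pos h, Set.indicator_of_mem (Set.mem_Ioo.2 ⟨ht.1, h⟩)]
      · rw [if_neg h, Set.indicator_of_notMem (fun hmem => h hmem.2)]
        exact ENNReal.ofReal_zero
    rw [h1, lintegral_indicator measurableSet_Ioo, Measure.restrict_restrict measurableSet_Ioo,
      Set.inter_eq_left.2 hIoosub, setLIntegral_const,
      stieltjesOfOn_measure_Ioo hcond hφ0 ⟨hd0.le, hda⟩]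
  have hφd0 : 0 ≤ φ d := by
    have := hmono (Set.left_mem_Icc.2 ha.le) ⟨hd0.le, hda⟩ hd0.le
    rw [hφ0] at this
    exact this
  have hcφ : c * φ d = 1 := by
    rw [hnormval, ← ENNReal.ofReal_mul hc.le] at hnorm
    have h := congrArg ENNReal.toReal hnorm
    rw [ENNReal.toReal_ofReal (mul_nonneg hc.le hφd0), ENNReal.toReal_one] at h
    exact h
  have hφdpos : 0 < φ d := by nlinarith
  have hφdinv : φ d = c⁻¹ := by field_simp; linarith [hcφ]
  -- the unimodular function
  set ε : ℝ → ℂ := fun s => if f s = 0 then 1 else ((‖f s‖⁻¹ : ℝ) : ℂ) * f s with hε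
  have hεmeas : Measurable ε := by
    apply Measurable.ite (hf (measurableSet_singleton 0)) measurable_const
    exact (Complex.measurable_ofReal.comp hf.norm.inv).mul hf
  have hεnorm : ∀ s, ‖ε s‖ = 1 := by
    intro s
    rw [hε]
    by_cases h : f s = 0
    · simp [h]
    · have : ‖f s‖ ≠ 0 := norm_ne_zero_iff.2 h
      simp only [if_neg h, norm_mul, Complex.norm_real, Real.norm_eq_abs,
        abs_of_nonneg (inv_nonneg.2 (norm_nonneg (f s)))]
      rw [inv_mul_cancel₀ this]
  refine ⟨E, hEmeas, hEsub, hD0, ε, hεmeas, Filter.Eventually.of_forall hεnorm, ?_⟩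
  filter_upwards [hae, ae_restrict_mem measurableSet_Icc] with s hs hsIcc
  rcases hs with h | h
  · rw [Set.indicator_of_notMem (fun hmem => hmem.2 h), h]
  · have hfs : f s ≠ 0 := by
      intro hz
      rw [hz] at h
      simp at h
      linarith
    have hsE : s ∈ E := ⟨hsIcc, hfs⟩
    rw [Set.indicator_of_mem hsE, hε]
    simp only [if_neg hfs, h]
    rw [hφdinv]
    push_cast
    rw [mul_comm, mul_div_assoc, div_self, mul_one]
    exact inv_ne_zero (by exact_mod_cast hc.ne')

end
end

section
/- Let a > 0 and let h : [0,a] → ℝ be measurable with |h(t)| ≤ 1 for a.e. t ∈ [0,a]. Set E₊ := {t ∈ [0,a] : h(t) > 0} and E₋ := {t ∈ [0,a] : h(t) < 0}. Then for a.e. t ∈ (0, m(E₊)) one has (1 + h)*(t) = 1 + (h·χ_{E₊})*(t); for a.e. t ∈ (m(E₊), a − m(E₋)) one has (1 + h)*(t) = 1; and for a.e. t ∈ (a − m(E₋), a) one has (1 + h)*(t) = 1 − (h·χ_{E₋})*(a − t). -/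
open MeasureTheory Set Filter Topology
open scoped ENNReal NNReal Classical

noncomputable section

section AuxR
variable (a : ℝ) (h : ℝ → ℝ)

lemma meas_gt (hm : Measurable h) (c : ℝ) :
    MeasurableSet {s ∈ Set.Icc (0:ℝ) a | c < h s} :=
  measurableSet_Icc.inter (measurableSet_lt measurable_const hm)

lemma meas_le (hm : Measurable h) (c : ℝ) :
    MeasurableSet {s ∈ Set.Icc (0:ℝ) a | h s ≤ c} :=
  measurableSet_Icc.inter (measurableSet_le hm measurable_const)

lemma part_sum (ha : 0 ≤ a) (hm : Measurable h) (c : ℝ) :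
    volume {s ∈ Set.Icc (0:ℝ) a | c < h s} + volume {s ∈ Set.Icc (0:ℝ) a | h s ≤ c}
      = ENNReal.ofReal a := by
  rw [← measure_union ?_ (meas_le a h hm c)]
  · rw [show {s ∈ Set.Icc (0:ℝ) a | c < h s} ∪ {s ∈ Set.Icc (0:ℝ) a | h s ≤ c}
        = Set.Icc (0:ℝ) a by
      ext s
      simp only [Set.mem_union, Set.mem_sep_iff]
      constructor
      · rintro (⟨hs, -⟩ | ⟨hs, -⟩) <;> exact hs
      · intro hs
        rcases lt_or_ge c (h s) with hc | hc
        · exact Or.inl ⟨hs, hc⟩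
        · exact Or.inr ⟨hs, hc⟩]
    rw [Real.volume_Icc, sub_zero]
  · refine Set.disjoint_left.2 ?_
    rintro s ⟨-, h1⟩ ⟨-, h2⟩
    exact absurd h2 (not_le.2 h1)

lemma gt_le_ofReal (c : ℝ) : volume {s ∈ Set.Icc (0:ℝ) a | c < h s} ≤ ENNReal.ofReal a := by
  refine le_trans (measure_mono (Set.sep_subset _ _)) ?_
  rw [Real.volume_Icc, sub_zero]

lemma le_le_ofReal (c : ℝ) : volume {s ∈ Set.Icc (0:ℝ) a | h s ≤ c} ≤ ENNReal.ofReal a := by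
  refine le_trans (measure_mono (Set.sep_subset _ _)) ?_
  rw [Real.volume_Icc, sub_zero]

variable {a h} (hb : ∀ᵐ t ∂(volume.restrict (Set.Icc (0:ℝ) a)), |h t| ≤ 1)

include hb in
lemma distrib_one_add (τ : ℝ) :
    distrib a (fun s => 1 + h s) τ = volume {s ∈ Set.Icc (0:ℝ) a | τ - 1 < h s} := by
  apply measure_congr
  rw [Filter.eventuallyEq_set]
  have hb' := (ae_restrict_iff' measurableSet_Icc).mp hb
  filter_upwards [hb'] with s hs
  simp only [Set.mem_sep_iff, Real.norm_eq_abs]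
  constructor
  · rintro ⟨hsi, hτ⟩
    refine ⟨hsi, ?_⟩
    have h1 : |h s| ≤ 1 := hs hsi
    have : |1 + h s| = 1 + h s := abs_of_nonneg (by linarith [neg_abs_le (h s)])
    rw [this] at hτ; linarith
  · rintro ⟨hsi, hτ⟩
    refine ⟨hsi, ?_⟩
    have h1 : |h s| ≤ 1 := hs hsi
    have : |1 + h s| = 1 + h s := abs_of_nonneg (by linarith [neg_abs_le (h s)])
    rw [this]; linarith

lemma distrib_pos (σ : ℝ) (hσ : 0 ≤ σ) :
    distrib a ((posSet a h).indicator h) σ = volume {s ∈ Set.Icc (0:ℝ) a | σ < h s} := by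
  unfold distrib
  congr 1
  ext s
  simp only [Set.mem_sep_iff, Real.norm_eq_abs, Set.indicator_apply]
  constructor
  · rintro ⟨hsi, hτ⟩
    refine ⟨hsi, ?_⟩
    by_cases hp : s ∈ posSet a h
    · simp only [hp, if_pos] at hτ
      have := (hp : s ∈ posSet a h).2
      rwa [abs_of_pos this] at hτ
    · simp only [hp, if_neg, not_false_iff, abs_zero] at hτ; linarith
  · rintro ⟨hsi, hτ⟩
    have hp : s ∈ posSet a h := ⟨hsi, lt_of_le_of_lt hσ hτ⟩
    refine ⟨hsi, ?_⟩
    simp only [hp, if_pos]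
    rwa [abs_of_pos hp.2]

lemma distrib_neg (σ : ℝ) (hσ : 0 ≤ σ) :
    distrib a ((negSet a h).indicator h) σ = volume {s ∈ Set.Icc (0:ℝ) a | h s < -σ} := by
  unfold distrib
  congr 1
  ext s
  simp only [Set.mem_sep_iff, Real.norm_eq_abs, Set.indicator_apply]
  constructor
  · rintro ⟨hsi, hτ⟩
    refine ⟨hsi, ?_⟩
    by_cases hp : s ∈ negSet a h
    · simp only [hp, if_pos] at hτ
      have hneg := (hp : s ∈ negSet a h).2
      rw [abs_of_neg hneg] at hτ; linarith
    · simp only [hp, if_neg, not_false_iff, abs_zero] at hτ; linarith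
  · rintro ⟨hsi, hτ⟩
    have hp : s ∈ negSet a h := ⟨hsi, by linarith⟩
    refine ⟨hsi, ?_⟩
    simp only [hp, if_pos]
    rw [abs_of_neg hp.2]; linarith

include hb in
lemma vol_gt_one : volume {s ∈ Set.Icc (0:ℝ) a | 1 < |h s|} = 0 := by
  have hb' := (ae_restrict_iff' measurableSet_Icc).mp hb
  have h0 : volume {x | ¬(x ∈ Set.Icc (0:ℝ) a → |h x| ≤ 1)} = 0 := ae_iff.mp hb'
  refine measure_mono_null ?_ h0
  intro s hs
  simp only [Set.mem_setOf_eq, not_forall, not_le]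
  exact ⟨hs.1, hs.2⟩

end AuxR

section Main
variable {a : ℝ} {h : ℝ → ℝ}

lemma meas_negSet (hm : Measurable h) : MeasurableSet (negSet a h) :=
  measurableSet_Icc.inter (measurableSet_lt hm measurable_const)

lemma sum_pos_neg (hm : Measurable h) :
    volume (posSet a h) + volume (negSet a h) ≤ ENNReal.ofReal a := by
  rw [← measure_union ?_ (meas_negSet hm)]
  · refine le_trans (measure_mono ?_) (le_of_eq (by rw [Real.volume_Icc, sub_zero]))
    rintro s (⟨hs, -⟩ | ⟨hs, -⟩) <;> exact hs
  · refine Set.disjoint_left.2 ?_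
    rintro s ⟨-, h1⟩ ⟨-, h2⟩
    exact absurd h2 (not_lt.2 h1.le)

lemma rearr_aux1 (ha : 0 < a) (hm : Measurable h)
    (hb : ∀ᵐ t ∂(volume.restrict (Set.Icc (0:ℝ) a)), |h t| ≤ 1)
    (t : ℝ) (ht : t ∈ Set.Ioo (0:ℝ) ((volume (posSet a h)).toReal)) :
    rearr a (fun s => 1 + h s) t = 1 + rearr a ((posSet a h).indicator h) t := by
  set D : ℝ → ℝ≥0∞ := fun c => volume {s ∈ Set.Icc (0:ℝ) a | c < h s} with hD
  have hfin : ENNReal.ofReal a ≠ ∞ := ENNReal.ofReal_ne_top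
  have hμpfin : volume (posSet a h) ≠ ∞ :=
    ne_top_of_le_ne_top hfin (gt_le_ofReal a h 0)
  have hμnfin : volume (negSet a h) ≠ ∞ :=
    ne_top_of_le_ne_top hfin (le_trans (measure_mono (Set.sep_subset _ _))
      (le_of_eq (by rw [Real.volume_Icc, sub_zero])))
  have hS1 : {τ : ℝ | 0 ≤ τ ∧ distrib a (fun s => 1 + h s) τ ≤ ENNReal.ofReal t}
      = {τ : ℝ | 0 ≤ τ ∧ D (τ - 1) ≤ ENNReal.ofReal t} := by
    ext τ; rw [Set.mem_setOf_eq, Set.mem_setOf_eq, distrib_one_add hb]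
  have hS2 : {σ : ℝ | 0 ≤ σ ∧ distrib a ((posSet a h).indicator h) σ ≤ ENNReal.ofReal t}
      = {σ : ℝ | 0 ≤ σ ∧ D σ ≤ ENNReal.ofReal t} := by
    ext σ
    simp only [Set.mem_setOf_eq]
    exact and_congr_right fun hσ => by rw [distrib_pos σ hσ]
  rw [rearr, rearr, hS1, hS2]
  set S1 := {τ : ℝ | 0 ≤ τ ∧ D (τ - 1) ≤ ENNReal.ofReal t} with hS1d
  set S2 := {σ : ℝ | 0 ≤ σ ∧ D σ ≤ ENNReal.ofReal t} with hS2d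
  have hbdd1 : BddBelow S1 := ⟨0, fun τ hτ => hτ.1⟩
  have hbdd2 : BddBelow S2 := ⟨0, fun σ hσ => hσ.1⟩
  have h1S2 : (1:ℝ) ∈ S2 := by
    refine ⟨zero_le_one, le_trans (le_of_eq ?_) zero_le⟩
    refine measure_mono_null ?_ (vol_gt_one hb)
    rintro s ⟨hs, hgt⟩
    exact ⟨hs, lt_of_lt_of_le hgt (le_abs_self _)⟩
  have hadd : ∀ σ ∈ S2, 1 + σ ∈ S1 := by
    rintro σ ⟨hσ0, hσ⟩
    refine ⟨by linarith, ?_⟩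
    rwa [show 1 + σ - 1 = σ by ring]
  have hS1ne : S1.Nonempty := ⟨1 + 1, hadd 1 h1S2⟩
  have h1le : ∀ τ ∈ S1, 1 ≤ τ := by
    rintro τ ⟨hτ0, hτ⟩
    by_contra hlt
    push_neg at hlt
    have hsub : {s ∈ Set.Icc (0:ℝ) a | h s ≤ τ - 1} ⊆ negSet a h := by
      rintro s ⟨hs, hle⟩
      exact ⟨hs, by linarith⟩
    have hpart := part_sum a h ha.le hm (τ - 1)
    have hlow : ENNReal.ofReal a - volume (negSet a h) ≤ D (τ - 1) := by
      rw [tsub_le_iff_right]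
      calc ENNReal.ofReal a = D (τ - 1) + volume {s ∈ Set.Icc (0:ℝ) a | h s ≤ τ - 1} :=
            hpart.symm
        _ ≤ D (τ - 1) + volume (negSet a h) := add_le_add_right (measure_mono hsub) _
    have hμp : volume (posSet a h) ≤ ENNReal.ofReal a - volume (negSet a h) :=
      ENNReal.le_sub_of_add_le_right hμnfin (sum_pos_neg hm)
    have htlt : ENNReal.ofReal t < volume (posSet a h) :=
      (ENNReal.ofReal_lt_iff_lt_toReal ht.1.le hμpfin).2 ht.2
    exact absurd hτ (not_le.2 (lt_of_lt_of_le htlt (le_trans hμp hlow)))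
  refine le_antisymm ?_ ?_
  · have key : sInf S1 - 1 ≤ sInf S2 := by
      refine le_csInf ⟨1, h1S2⟩ fun σ hσ => ?_
      have := csInf_le hbdd1 (hadd σ hσ)
      linarith
    linarith
  · refine le_csInf hS1ne fun τ hτ => ?_
    have h1τ := h1le τ hτ
    have : τ - 1 ∈ S2 := ⟨by linarith, hτ.2⟩
    have := csInf_le hbdd2 this
    linarith

lemma rearr_aux2 (ha : 0 < a) (hm : Measurable h)
    (hb : ∀ᵐ t ∂(volume.restrict (Set.Icc (0:ℝ) a)), |h t| ≤ 1)
    (t : ℝ) (ht : t ∈ Set.Ioo ((volume (posSet a h)).toReal)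
      (a - (volume (negSet a h)).toReal)) :
    rearr a (fun s => 1 + h s) t = 1 := by
  set D : ℝ → ℝ≥0∞ := fun c => volume {s ∈ Set.Icc (0:ℝ) a | c < h s} with hD
  have hfin : ENNReal.ofReal a ≠ ∞ := ENNReal.ofReal_ne_top
  have hμpfin : volume (posSet a h) ≠ ∞ :=
    ne_top_of_le_ne_top hfin (gt_le_ofReal a h 0)
  have hμnle : volume (negSet a h) ≤ ENNReal.ofReal a :=
    le_trans (measure_mono (Set.sep_subset _ _))
      (le_of_eq (by rw [Real.volume_Icc, sub_zero]))
  have ht0 : 0 ≤ t := le_trans ENNReal.toReal_nonneg ht.1.le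
  have hS1 : {τ : ℝ | 0 ≤ τ ∧ distrib a (fun s => 1 + h s) τ ≤ ENNReal.ofReal t}
      = {τ : ℝ | 0 ≤ τ ∧ D (τ - 1) ≤ ENNReal.ofReal t} := by
    ext τ; rw [Set.mem_setOf_eq, Set.mem_setOf_eq, distrib_one_add hb]
  rw [rearr, hS1]
  have hmem : (1:ℝ) ∈ {τ : ℝ | 0 ≤ τ ∧ D (τ - 1) ≤ ENNReal.ofReal t} := by
    refine ⟨zero_le_one, ?_⟩
    have : D (1 - 1) = volume (posSet a h) := by norm_num [hD, posSet]
    rw [this]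
    exact le_of_lt ((ENNReal.lt_ofReal_iff_toReal_lt hμpfin).2 ht.1)
  have hlb : ∀ τ ∈ {τ : ℝ | 0 ≤ τ ∧ D (τ - 1) ≤ ENNReal.ofReal t}, 1 ≤ τ := by
    rintro τ ⟨hτ0, hτ⟩
    by_contra hlt
    push_neg at hlt
    have hsub : {s ∈ Set.Icc (0:ℝ) a | h s ≤ τ - 1} ⊆ negSet a h := by
      rintro s ⟨hs, hle⟩
      exact ⟨hs, by linarith⟩
    have hpart := part_sum a h ha.le hm (τ - 1)
    have hlow : ENNReal.ofReal a - volume (negSet a h) ≤ D (τ - 1) := by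
      rw [tsub_le_iff_right]
      calc ENNReal.ofReal a = D (τ - 1) + volume {s ∈ Set.Icc (0:ℝ) a | h s ≤ τ - 1} :=
            hpart.symm
        _ ≤ D (τ - 1) + volume (negSet a h) := add_le_add_right (measure_mono hsub) _
    have hsubfin : ENNReal.ofReal a - volume (negSet a h) ≠ ∞ :=
      ne_top_of_le_ne_top hfin tsub_le_self
    have htoReal : (ENNReal.ofReal a - volume (negSet a h)).toReal
        = a - (volume (negSet a h)).toReal := by
      rw [ENNReal.toReal_sub_of_le hμnle hfin, ENNReal.toReal_ofReal ha.le]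
    have htlt : ENNReal.ofReal t < ENNReal.ofReal a - volume (negSet a h) := by
      rw [ENNReal.ofReal_lt_iff_lt_toReal ht0 hsubfin, htoReal]
      exact ht.2
    exact absurd hτ (not_le.2 (lt_of_lt_of_le htlt hlow))
  exact IsLeast.csInf_eq ⟨hmem, hlb⟩

lemma rearr_aux3 (ha : 0 < a) (hm : Measurable h)
    (hb : ∀ᵐ t ∂(volume.restrict (Set.Icc (0:ℝ) a)), |h t| ≤ 1)
    (t : ℝ) (ht : t ∈ Set.Ioo (a - (volume (negSet a h)).toReal) a)
    (hg : ∀ q : ℚ, volume {s ∈ Set.Icc (0:ℝ) a | h s < -(q:ℝ)} ≠ ENNReal.ofReal (a - t)) :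
    rearr a (fun s => 1 + h s) t = 1 - rearr a ((negSet a h).indicator h) (a - t) := by
  set D : ℝ → ℝ≥0∞ := fun c => volume {s ∈ Set.Icc (0:ℝ) a | c < h s} with hD
  set G : ℝ → ℝ≥0∞ := fun σ => volume {s ∈ Set.Icc (0:ℝ) a | h s < -σ} with hG
  set F : ℝ → ℝ≥0∞ := fun σ => volume {s ∈ Set.Icc (0:ℝ) a | h s ≤ -σ} with hF
  have hfin : ENNReal.ofReal a ≠ ∞ := ENNReal.ofReal_ne_top
  have hμnle : volume (negSet a h) ≤ ENNReal.ofReal a :=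
    le_trans (measure_mono (Set.sep_subset _ _))
      (le_of_eq (by rw [Real.volume_Icc, sub_zero]))
  have ht0 : 0 ≤ t := by
    have : (volume (negSet a h)).toReal ≤ a := by
      have := ENNReal.toReal_mono hfin hμnle
      rwa [ENNReal.toReal_ofReal ha.le] at this
    linarith [ht.1]
  have hat0 : 0 ≤ a - t := by linarith [ht.2]
  -- partition: D (τ-1) + F (1-τ) = ofReal a
  have hpart : ∀ τ : ℝ, D (τ - 1) + F (1 - τ) = ENNReal.ofReal a := by
    intro τ
    have h1 := part_sum a h ha.le hm (τ - 1)
    have h2 : F (1 - τ) = volume {s ∈ Set.Icc (0:ℝ) a | h s ≤ τ - 1} := by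
      show volume {s ∈ Set.Icc (0:ℝ) a | h s ≤ -(1 - τ)} = _
      rw [show (-(1 - τ) : ℝ) = τ - 1 by ring]
    rw [h2]
    exact h1
  have hsplit : ENNReal.ofReal a = ENNReal.ofReal t + ENNReal.ofReal (a - t) := by
    rw [← ENNReal.ofReal_add ht0 hat0]
    norm_num
  -- S1, S2
  have hS1 : {τ : ℝ | 0 ≤ τ ∧ distrib a (fun s => 1 + h s) τ ≤ ENNReal.ofReal t}
      = {τ : ℝ | 0 ≤ τ ∧ D (τ - 1) ≤ ENNReal.ofReal t} := by
    ext τ; rw [Set.mem_setOf_eq, Set.mem_setOf_eq, distrib_one_add hb]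
  have hS2 : {σ : ℝ | 0 ≤ σ ∧ distrib a ((negSet a h).indicator h) σ
        ≤ ENNReal.ofReal (a - t)}
      = {σ : ℝ | 0 ≤ σ ∧ G σ ≤ ENNReal.ofReal (a - t)} := by
    ext σ
    simp only [Set.mem_setOf_eq]
    exact and_congr_right fun hσ => by rw [distrib_neg σ hσ]
  rw [rearr, rearr, hS1, hS2]
  set S1 := {τ : ℝ | 0 ≤ τ ∧ D (τ - 1) ≤ ENNReal.ofReal t} with hS1d
  set S2 := {σ : ℝ | 0 ≤ σ ∧ G σ ≤ ENNReal.ofReal (a - t)} with hS2d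
  have hbdd1 : BddBelow S1 := ⟨0, fun τ hτ => hτ.1⟩
  have hbdd2 : BddBelow S2 := ⟨0, fun σ hσ => hσ.1⟩
  have h1S2 : (1:ℝ) ∈ S2 := by
    refine ⟨zero_le_one, le_trans (le_of_eq ?_) zero_le⟩
    refine measure_mono_null ?_ (vol_gt_one hb)
    rintro s ⟨hs, hgt⟩
    exact ⟨hs, by linarith [neg_le_abs (h s)]⟩
  have h1S1 : (1:ℝ) ∈ S1 := by
    refine ⟨zero_le_one, ?_⟩
    have hD0 : D (1 - 1) = volume (posSet a h) := by norm_num [hD, posSet]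
    rw [hD0]
    have hμp : volume (posSet a h) ≤ ENNReal.ofReal a - volume (negSet a h) :=
      ENNReal.le_sub_of_add_le_right
        (ne_top_of_le_ne_top hfin hμnle) (sum_pos_neg hm)
    refine le_trans hμp (le_of_lt ?_)
    have hsubfin : ENNReal.ofReal a - volume (negSet a h) ≠ ∞ :=
      ne_top_of_le_ne_top hfin tsub_le_self
    rw [ENNReal.lt_ofReal_iff_toReal_lt hsubfin,
      ENNReal.toReal_sub_of_le hμnle hfin, ENNReal.toReal_ofReal ha.le]
    exact ht.1
  have hne1 : S1.Nonempty := ⟨1, h1S1⟩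
  have hne2 : S2.Nonempty := ⟨1, h1S2⟩
  set A := sInf S1 with hA
  set B := sInf S2 with hB
  have hA0 : 0 ≤ A := le_csInf hne1 fun τ hτ => hτ.1
  have hB0 : 0 ≤ B := le_csInf hne2 fun σ hσ => hσ.1
  have hA1 : A ≤ 1 := csInf_le hbdd1 h1S1
  have hB1 : B ≤ 1 := csInf_le hbdd2 h1S2
  -- cancellation helper
  have hcancel : ∀ x : ℝ≥0∞, x + ENNReal.ofReal (a - t) ≤ ENNReal.ofReal a
      → x ≤ ENNReal.ofReal t := by
    intro x hx
    rw [hsplit] at hx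
    exact (ENNReal.add_le_add_iff_right ENNReal.ofReal_ne_top).1 hx
  have hcancel' : ∀ x : ℝ≥0∞, ENNReal.ofReal a ≤ ENNReal.ofReal t + x
      → ENNReal.ofReal (a - t) ≤ x := by
    intro x hx
    rw [hsplit] at hx
    exact (ENNReal.add_le_add_iff_left ENNReal.ofReal_ne_top).1 hx
  -- step ≤ : A ≤ 1 - B
  have hup : ∀ τ : ℝ, 1 - B < τ → τ ∈ S1 := by
    intro τ hτ
    have hτ0 : 0 ≤ τ := by linarith
    rcases le_or_gt 1 τ with h1τ | h1τ
    · refine ⟨hτ0, le_trans (measure_mono ?_) h1S1.2⟩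
      rintro s ⟨hs, hlt⟩
      exact ⟨hs, by linarith⟩
    · have hσB : 1 - τ < B := by linarith
      have hσ0 : 0 ≤ 1 - τ := by linarith
      have hnm : (1 - τ) ∉ S2 := notMem_of_lt_csInf hσB hbdd2
      have hGgt : ENNReal.ofReal (a - t) < G (1 - τ) := by
        by_contra hle
        exact hnm ⟨hσ0, not_lt.1 hle⟩
      have hFge : ENNReal.ofReal (a - t) ≤ F (1 - τ) :=
        le_trans hGgt.le (measure_mono (fun s hs => ⟨hs.1, hs.2.le⟩))
      refine ⟨hτ0, hcancel _ ?_⟩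
      calc D (τ - 1) + ENNReal.ofReal (a - t) ≤ D (τ - 1) + F (1 - τ) :=
            add_le_add_right hFge _
        _ = ENNReal.ofReal a := hpart τ
  have hle : A ≤ 1 - B := by
    by_contra hc
    push_neg at hc
    have hmem := hup ((1 - B + A) / 2) (by linarith)
    have := csInf_le hbdd1 hmem
    linarith
  -- step ≥ : 1 - B ≤ A
  have hge : 1 - B ≤ A := by
    by_contra hc
    push_neg at hc
    have hBA : B < 1 - A := by linarith
    obtain ⟨q, hqB, hqA⟩ := exists_rat_btwn hBA
    refine hg q ?_
    refine le_antisymm ?_ ?_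
    · -- G q ≤ ofReal (a - t)
      obtain ⟨σ₀, hσ₀S, hσ₀lt⟩ := exists_lt_of_csInf_lt hne2 hqB
      refine le_trans (measure_mono ?_) hσ₀S.2
      rintro s ⟨hs, hlt⟩
      exact ⟨hs, by linarith⟩
    · -- ofReal (a - t) ≤ G q
      set σ' : ℝ := ((q:ℝ) + (1 - A)) / 2 with hσ'
      have hqσ' : (q:ℝ) < σ' := by rw [hσ']; linarith
      have hσ'A : A < 1 - σ' := by rw [hσ']; linarith
      obtain ⟨τ₀, hτ₀S, hτ₀lt⟩ := exists_lt_of_csInf_lt hne1 hσ'A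
      have hDle : D ((1 - σ') - 1) ≤ ENNReal.ofReal t := by
        refine le_trans (measure_mono ?_) hτ₀S.2
        rintro s ⟨hs, hlt⟩
        exact ⟨hs, by linarith⟩
      have hFge : ENNReal.ofReal (a - t) ≤ F σ' := by
        refine hcancel' _ ?_
        calc ENNReal.ofReal a = D ((1 - σ') - 1) + F (1 - (1 - σ')) :=
              (hpart (1 - σ')).symm
          _ = D ((1 - σ') - 1) + F σ' := by norm_num
          _ ≤ ENNReal.ofReal t + F σ' := add_le_add_left hDle _
      refine le_trans hFge (measure_mono ?_)
      rintro s ⟨hs, hle'⟩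
      exact ⟨hs, by linarith⟩
  linarith

end Main

/-- For measurable `h : [0,a] → ℝ` with `|h| ≤ 1` a.e., the decreasing
rearrangement of `1 + h` satisfies: `(1+h)* = 1 + (h χ_{E₊})*` on `(0, m E₊)`,
`(1+h)* = 1` on `(m E₊, a − m E₋)`, and `(1+h)*(t) = 1 − (h χ_{E₋})*(a − t)` on
`(a − m E₋, a)`, where `E₊ = {h > 0}` and `E₋ = {h < 0}` in `[0,a]`. -/
theorem rearr_one_add_h (a : ℝ) (ha : 0 < a)
    (h : ℝ → ℝ) (hm : Measurable h)
    (hb : ∀ᵐ t ∂(volume.restrict (Set.Icc (0:ℝ) a)), |h t| ≤ 1) :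
    (∀ᵐ t ∂(volume.restrict (Set.Ioo (0:ℝ) ((volume (posSet a h)).toReal))),
        rearr a (fun s => 1 + h s) t = 1 + rearr a ((posSet a h).indicator h) t) ∧
    (∀ᵐ t ∂(volume.restrict
        (Set.Ioo ((volume (posSet a h)).toReal) (a - (volume (negSet a h)).toReal))),
        rearr a (fun s => 1 + h s) t = 1) ∧
    (∀ᵐ t ∂(volume.restrict (Set.Ioo (a - (volume (negSet a h)).toReal) a)),
        rearr a (fun s => 1 + h s) t = 1 - rearr a ((negSet a h).indicator h) (a - t)) := by
  refine ⟨ae_restrict_of_forall_mem measurableSet_Ioo fun t ht => rearr_aux1 ha hm hb t ht,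
    ae_restrict_of_forall_mem measurableSet_Ioo fun t ht => rearr_aux2 ha hm hb t ht, ?_⟩
  have hbad : volume (⋃ q : ℚ, {t : ℝ | t < a ∧
      volume {s ∈ Set.Icc (0:ℝ) a | h s < -(q:ℝ)} = ENNReal.ofReal (a - t)}) = 0 := by
    refine measure_iUnion_null fun q => ?_
    refine Set.Subsingleton.measure_zero ?_ volume
    rintro t₁ ⟨h1a, h1⟩ t₂ ⟨h2a, h2⟩
    have heq := h1.symm.trans h2
    rw [ENNReal.ofReal_eq_ofReal_iff (by linarith) (by linarith)] at heq
    linarith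
  have hae := measure_eq_zero_iff_ae_notMem.mp hbad
  have hae' : ∀ᵐ t ∂(volume.restrict (Set.Ioo (a - (volume (negSet a h)).toReal) a)),
      t ∉ ⋃ q : ℚ, {t : ℝ | t < a ∧
        volume {s ∈ Set.Icc (0:ℝ) a | h s < -(q:ℝ)} = ENNReal.ofReal (a - t)} :=
    Filter.Eventually.filter_mono (ae_mono Measure.restrict_le_self) hae
  filter_upwards [hae', ae_restrict_mem measurableSet_Ioo] with t htn htm
  refine rearr_aux3 ha hm hb t htm fun q hq => ?_
  exact htn (Set.mem_iUnion.2 ⟨q, htm.2, hq⟩)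


end
end
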